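/- For any integer l ≥ 4 and real numbers x, y, the generating function D_l(x,y) := Σ_{l1≥2, l2≥1, l1+l2=l} x^{l1-1} y^{l2-1} ζ(l1,l2) satisfies D_l(x+y, y) + D_l(x+y, x) = D_l(x,y) + D_l(y,x) + ((x^{l-1} - y^{l-1})/(x - y))·ζ(l), where for x = y the quotient is interpreted as the polynomial Σ_{j=0}^{l-2} x^j y^{l-2-j}. -/

import Mathlib

open Finset Function

/-- Riemann zeta value -/
noncomputable def rz (l : ℕ) : ℝ :=
  ∑' m : ℕ, if 0 < m then 1 / (m : ℝ) ^ l else 0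

/-- double zeta value -/
noncomputable def dz (a b : ℕ) : ℝ :=
  ∑' p : ℕ × ℕ, if p.2 < p.1 ∧ 0 < p.2 then
    1 / ((p.1 : ℝ) ^ a * (p.2 : ℝ) ^ b) else 0

/-- triple zeta value -/
noncomputable def tz (a b c : ℕ) : ℝ :=
  ∑' t : ℕ × ℕ × ℕ, if t.2.1 < t.1 ∧ t.2.2 < t.2.1 ∧ 0 < t.2.2 then
    1 / ((t.1 : ℝ) ^ a * (t.2.1 : ℝ) ^ b * (t.2.2 : ℝ) ^ c) else 0

/-- admissible triple indices of weight l -/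
def TIdx (l : ℕ) : Finset (ℕ × ℕ × ℕ) :=
  (Finset.range (l + 1) ×ˢ Finset.range (l + 1) ×ˢ Finset.range (l + 1)).filter
    (fun t => 2 ≤ t.1 ∧ 1 ≤ t.2.1 ∧ 1 ≤ t.2.2 ∧ t.1 + t.2.1 + t.2.2 = l)

noncomputable def zf (a : ℕ) (m : ℕ) : ℝ := if 0 < m then 1 / (m : ℝ) ^ a else 0

noncomputable def df (a b : ℕ) (p : ℕ × ℕ) : ℝ :=
  if p.2 < p.1 ∧ 0 < p.2 then 1 / ((p.1 : ℝ) ^ a * (p.2 : ℝ) ^ b) else 0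

noncomputable def wg (a b c : ℕ) (p : ℕ × ℕ) : ℝ :=
  if 0 < p.1 ∧ 0 < p.2 then
    1 / ((p.1 : ℝ) ^ a * (p.2 : ℝ) ^ b * ((p.1 : ℝ) + (p.2 : ℝ)) ^ c) else 0

lemma rz_eq (l : ℕ) : rz l = ∑' m, zf l m := rfl
lemma dz_eq (a b : ℕ) : dz a b = ∑' p, df a b p := rfl

lemma zf_nonneg (a m : ℕ) : 0 ≤ zf a m := by unfold zf; split <;> positivity
lemma df_nonneg (a b : ℕ) (p : ℕ × ℕ) : 0 ≤ df a b p := by unfold df; split <;> positivity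
lemma wg_nonneg (a b c : ℕ) (p : ℕ × ℕ) : 0 ≤ wg a b c p := by unfold wg; split <;> positivity

noncomputable def Q (m : ℕ) : ℝ := if 0 < m then ((m : ℝ) * Real.sqrt m)⁻¹ else 0

lemma Q_nonneg (m : ℕ) : 0 ≤ Q m := by unfold Q; split <;> positivity

lemma summable_Q : Summable Q := by
  have h : Summable fun n : ℕ => 1 / (n : ℝ) ^ ((3 : ℝ) / 2) :=
    Real.summable_one_div_nat_rpow.mpr (by norm_num)
  apply h.congr
  intro m
  unfold Q
  rcases Nat.eq_zero_or_pos m with rfl | hm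
  · rw [if_neg (by omega)]
    simp [Real.zero_rpow (by norm_num : (3:ℝ)/2 ≠ 0)]
  · have hm' : (0 : ℝ) < m := by exact_mod_cast hm
    rw [if_pos hm, one_div]
    congr 1
    rw [show (3:ℝ)/2 = 1 + 1/2 by norm_num, Real.rpow_add hm', Real.rpow_one,
      ← Real.sqrt_eq_rpow]

/-- key: from `Y^2 ≤ X^2` conclude `1/X ≤ 1/Y` -/
lemma one_div_le_one_div_of_sq (X Y : ℝ) (hY : 0 < Y) (hX : 0 ≤ X) (h : Y ^ 2 ≤ X ^ 2) :
    1 / X ≤ 1 / Y := by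
  have hXY : Y ≤ X := by nlinarith
  exact one_div_le_one_div_of_le hY hXY

lemma QQ_eq (m n : ℕ) (hm : 0 < m) (hn : 0 < n) :
    Q m * Q n = 1 / ((m : ℝ) * Real.sqrt m * ((n : ℝ) * Real.sqrt n)) := by
  unfold Q
  rw [if_pos hm, if_pos hn, one_div, mul_inv, mul_inv, mul_inv]
  ring

lemma sq_QQden (m n : ℕ) :
    ((m : ℝ) * Real.sqrt m * ((n : ℝ) * Real.sqrt n)) ^ 2 = (m : ℝ) ^ 3 * (n : ℝ) ^ 3 := by
  have h1 : Real.sqrt (m : ℝ) ^ 2 = (m : ℝ) := Real.sq_sqrt (by positivity)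
  have h2 : Real.sqrt (n : ℝ) ^ 2 = (n : ℝ) := Real.sq_sqrt (by positivity)
  rw [mul_pow, mul_pow, mul_pow, h1, h2]
  ring

lemma df_le_QQ {a b : ℕ} (ha : 2 ≤ a) (hb : 1 ≤ b) (p : ℕ × ℕ) :
    df a b p ≤ Q p.1 * Q p.2 := by
  obtain ⟨m, n⟩ := p
  unfold df
  split
  · rename_i h
    obtain ⟨hnm, hn⟩ := h
    have hm : 0 < m := lt_trans hn hnm
    have hm1 : (1 : ℝ) ≤ m := by exact_mod_cast hm
    have hn1 : (1 : ℝ) ≤ n := by exact_mod_cast hn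
    have hnmR : (n : ℝ) ≤ m := by exact_mod_cast hnm.le
    rw [QQ_eq m n hm hn]
    apply one_div_le_one_div_of_sq _ _ (by positivity) (by positivity)
    rw [sq_QQden]
    calc (m:ℝ)^3 * (n:ℝ)^3 = ((m:ℝ)^3 * (n:ℝ)^2) * n := by ring
    _ ≤ ((m:ℝ)^3 * (n:ℝ)^2) * m := by
        apply mul_le_mul_of_nonneg_left hnmR (by positivity)
    _ = (m:ℝ)^4 * (n:ℝ)^2 := by ring
    _ ≤ ((m:ℝ)^a * (n:ℝ)^b) ^ 2 := by
        rw [mul_pow, ← pow_mul, ← pow_mul]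
        exact mul_le_mul (pow_le_pow_right₀ hm1 (by omega)) (pow_le_pow_right₀ hn1 (by omega))
          (by positivity) (by positivity)
  · exact mul_nonneg (Q_nonneg _) (Q_nonneg _)

lemma wg_le_QQ {a b c : ℕ} (ha : 1 ≤ a) (hb : 1 ≤ b) (hac : 2 ≤ a + c) (hbc : 2 ≤ b + c)
    (p : ℕ × ℕ) : wg a b c p ≤ Q p.1 * Q p.2 := by
  obtain ⟨m, n⟩ := p
  unfold wg
  split
  · rename_i h
    obtain ⟨hm, hn⟩ := h
    have hm1 : (1 : ℝ) ≤ m := by exact_mod_cast hm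
    have hn1 : (1 : ℝ) ≤ n := by exact_mod_cast hn
    rw [QQ_eq m n hm hn]
    apply one_div_le_one_div_of_sq _ _ (by positivity) (by positivity)
    rw [sq_QQden]
    have key : (m:ℝ)^(2*a+c) * (n:ℝ)^(2*b+c) ≤ ((m:ℝ)^a * (n:ℝ)^b * ((m:ℝ)+(n:ℝ))^c) ^ 2 := by
      have h1 : (m:ℝ) * n ≤ ((m:ℝ)+(n:ℝ))^2 := by nlinarith
      have h2 : ((m:ℝ) * n) ^ c ≤ (((m:ℝ)+(n:ℝ))^2)^c :=
        pow_le_pow_left₀ (by positivity) h1 c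
      calc (m:ℝ)^(2*a+c) * (n:ℝ)^(2*b+c)
          = ((m:ℝ)^a)^2 * ((n:ℝ)^b)^2 * ((m:ℝ)*n)^c := by
            rw [pow_add, pow_add]; ring
        _ ≤ ((m:ℝ)^a)^2 * ((n:ℝ)^b)^2 * (((m:ℝ)+(n:ℝ))^2)^c := by
            apply mul_le_mul_of_nonneg_left h2 (by positivity)
        _ = ((m:ℝ)^a * (n:ℝ)^b * ((m:ℝ)+(n:ℝ))^c) ^ 2 := by
            rw [← pow_mul ((m:ℝ)+(n:ℝ)) 2 c, mul_comm 2 c, pow_mul]; ring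
    calc (m:ℝ)^3 * (n:ℝ)^3 ≤ (m:ℝ)^(2*a+c) * (n:ℝ)^(2*b+c) :=
        mul_le_mul (pow_le_pow_right₀ hm1 (by omega)) (pow_le_pow_right₀ hn1 (by omega))
          (by positivity) (by positivity)
      _ ≤ _ := key
  · exact mul_nonneg (Q_nonneg _) (Q_nonneg _)

lemma summable_QQ : Summable fun p : ℕ × ℕ => Q p.1 * Q p.2 :=
  summable_Q.mul_of_nonneg summable_Q Q_nonneg Q_nonneg

lemma summable_df {a b : ℕ} (ha : 2 ≤ a) (hb : 1 ≤ b) : Summable (df a b) :=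
  Summable.of_nonneg_of_le (df_nonneg a b) (df_le_QQ ha hb) summable_QQ

lemma summable_wg {a b c : ℕ} (ha : 1 ≤ a) (hb : 1 ≤ b) (hac : 2 ≤ a + c) (hbc : 2 ≤ b + c) :
    Summable (wg a b c) :=
  Summable.of_nonneg_of_le (wg_nonneg a b c) (wg_le_QQ ha hb hac hbc) summable_QQ

lemma summable_zf {a : ℕ} (ha : 2 ≤ a) : Summable (zf a) := by
  have h : Summable fun n : ℕ => 1 / (n : ℝ) ^ a := Real.summable_one_div_nat_pow.mpr (by omega)
  apply h.congr
  intro m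
  unfold zf
  rcases Nat.eq_zero_or_pos m with rfl | hm
  · rw [if_neg (by omega)]
    simp [zero_pow (by omega : a ≠ 0)]
  · rw [if_pos hm]

lemma hasSum_df {a b : ℕ} (ha : 2 ≤ a) (hb : 1 ≤ b) : HasSum (df a b) (dz a b) := by
  rw [dz_eq]; exact (summable_df ha hb).hasSum

lemma hasSum_zf {a : ℕ} (ha : 2 ≤ a) : HasSum (zf a) (rz a) := by
  rw [rz_eq]; exact (summable_zf ha).hasSum

def PP (q : ℕ × ℕ) : ℕ × ℕ := (q.1 + q.2 + 2, q.2 + 1)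
def PP2 (q : ℕ × ℕ) : ℕ × ℕ := (q.1 + q.2 + 2, q.1 + 1)
def EE (q : ℕ × ℕ) : ℕ × ℕ := (q.1 + 1, q.2 + 1)

lemma PP_inj : Injective PP := by
  rintro ⟨s, t⟩ ⟨s', t'⟩ h
  simp only [PP, Prod.mk.injEq] at h
  exact Prod.ext (by omega) (by omega)

lemma PP2_inj : Injective PP2 := by
  rintro ⟨s, t⟩ ⟨s', t'⟩ h
  simp only [PP2, Prod.mk.injEq] at h
  exact Prod.ext (by omega) (by omega)

lemma EE_inj : Injective EE := by
  rintro ⟨s, t⟩ ⟨s', t'⟩ h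
  simp only [EE, Prod.mk.injEq] at h
  exact Prod.ext (by omega) (by omega)

lemma mem_range_PP {x : ℕ × ℕ} (h : x.2 < x.1 ∧ 0 < x.2) : x ∈ Set.range PP :=
  ⟨(x.1 - x.2 - 1, x.2 - 1), Prod.ext (by simp only [PP]; omega) (by simp only [PP]; omega)⟩

lemma mem_range_PP2 {x : ℕ × ℕ} (h : x.2 < x.1 ∧ 0 < x.2) : x ∈ Set.range PP2 :=
  ⟨(x.2 - 1, x.1 - x.2 - 1), Prod.ext (by simp only [PP2]; omega) (by simp only [PP2]; omega)⟩

lemma mem_range_EE {x : ℕ × ℕ} (h : 0 < x.1 ∧ 0 < x.2) : x ∈ Set.range EE :=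
  ⟨(x.1 - 1, x.2 - 1), Prod.ext (by simp only [EE]; omega) (by simp only [EE]; omega)⟩

lemma df_vanish_PP (a b : ℕ) : ∀ x ∉ Set.range PP, df a b x = 0 := by
  intro x hx
  unfold df
  rw [if_neg fun h => hx (mem_range_PP h)]

lemma df_vanish_PP2 (a b : ℕ) : ∀ x ∉ Set.range PP2, df a b x = 0 := by
  intro x hx
  unfold df
  rw [if_neg fun h => hx (mem_range_PP2 h)]

lemma wg_vanish_EE (a b c : ℕ) : ∀ x ∉ Set.range EE, wg a b c x = 0 := by
  intro x hx
  unfold wg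
  rw [if_neg fun h => hx (mem_range_EE h)]

/-- the stuffle (harmonic product) relation -/
lemma stuffle {a b : ℕ} (ha : 2 ≤ a) (hb : 2 ≤ b) :
    rz a * rz b = dz a b + dz b a + rz (a + b) := by
  have hsplit : (fun p : ℕ × ℕ => zf a p.1 * zf b p.2) =
      fun p => df a b p + df b a (p.2, p.1) + (if p.1 = p.2 then zf (a + b) p.1 else 0) := by
    funext ⟨m, n⟩
    unfold zf df
    dsimp only
    split_ifs <;> try omega
    all_goals try (simp_all [div_mul_div_comm, pow_add]; done)
    · ring
    · subst_vars; rw [pow_add]; ring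
  have h1 : HasSum (df a b) (dz a b) := hasSum_df ha (by omega)
  have h2 : HasSum (fun p : ℕ × ℕ => df b a (p.2, p.1)) (dz b a) := by
    have := ((Equiv.prodComm ℕ ℕ).hasSum_iff (f := df b a)
      (a := dz b a)).mpr (hasSum_df hb (by omega))
    exact this
  have h3 : HasSum (fun p : ℕ × ℕ => if p.1 = p.2 then zf (a + b) p.1 else 0) (rz (a + b)) := by
    have hd : Injective (fun m : ℕ => (m, m)) := fun x y h => (Prod.mk.injEq _ _ _ _).mp h |>.1
    refine (hd.hasSum_iff ?_).mp ?_
    · intro x hx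
      rw [if_neg]
      intro h
      exact hx ⟨x.1, Prod.ext rfl h⟩
    · have he : ((fun p : ℕ × ℕ => if p.1 = p.2 then zf (a + b) p.1 else 0) ∘
          fun m : ℕ => (m, m)) = zf (a + b) := by
        funext m; simp
      rw [he]
      exact hasSum_zf (by omega)
  have hsum := (h1.add h2).add h3
  rw [← hsplit] at hsum
  exact (hasSum_zf ha).mul_eq (hasSum_zf hb) hsum

/-- endpoint: `W(a,0,c) = ζ(c,a)` -/
lemma hasSum_wg_right {a c : ℕ} (ha : 1 ≤ a) (hc : 2 ≤ c) : HasSum (wg a 0 c) (dz c a) := by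
  have h2 : HasSum (df c a ∘ PP2) (dz c a) :=
    (PP2_inj.hasSum_iff (df_vanish_PP2 c a)).mpr (hasSum_df hc ha)
  have h3 : df c a ∘ PP2 = wg a 0 c ∘ EE := by
    funext ⟨s, t⟩
    simp only [comp_apply, PP2, EE, df, wg]
    simp only [show s + 1 < s + t + 2 ∧ 0 < s + 1 by omega, show 0 < s + 1 ∧ 0 < t + 1 by omega, and_self, ↓reduceIte]
    push_cast
    ring
  rw [h3] at h2
  exact (EE_inj.hasSum_iff (wg_vanish_EE a 0 c)).mp h2

/-- endpoint: `W(0,b,c) = ζ(c,b)` -/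
lemma hasSum_wg_left {b c : ℕ} (hb : 1 ≤ b) (hc : 2 ≤ c) : HasSum (wg 0 b c) (dz c b) := by
  have h2 : HasSum (df c b ∘ PP) (dz c b) :=
    (PP_inj.hasSum_iff (df_vanish_PP c b)).mpr (hasSum_df hc hb)
  have h3 : df c b ∘ PP = wg 0 b c ∘ EE := by
    funext ⟨s, t⟩
    simp only [comp_apply, PP, EE, df, wg]
    simp only [show t + 1 < s + t + 2 ∧ 0 < t + 1 by omega, show 0 < s + 1 ∧ 0 < t + 1 by omega, and_self, ↓reduceIte]
    push_cast
    ring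
  rw [h3] at h2
  exact (EE_inj.hasSum_iff (wg_vanish_EE 0 b c)).mp h2

noncomputable def Ea (a b c : ℕ) : ℝ :=
  ∑ r ∈ range a, ((b + r - 1).choose r : ℝ) * dz (c + b + r) (a - r)
noncomputable def Eb (a b c : ℕ) : ℝ :=
  ∑ r ∈ range b, ((a + r - 1).choose r : ℝ) * dz (c + a + r) (b - r)

lemma Ea_zero_b (a c : ℕ) (ha : 1 ≤ a) : Ea a 0 c = dz c a := by
  unfold Ea
  rw [Finset.sum_eq_single_of_mem 0 (by simp; omega)]
  · simp
  · intro r hr hr0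
    rw [Nat.choose_eq_zero_of_lt (by omega), Nat.cast_zero, zero_mul]

lemma Eb_zero_b (a c : ℕ) : Eb a 0 c = 0 := by unfold Eb; simp

lemma Ea_zero_a (b c : ℕ) : Ea 0 b c = 0 := by unfold Ea; simp

lemma Eb_zero_a (b c : ℕ) (hb : 1 ≤ b) : Eb 0 b c = dz c b := by
  unfold Eb
  rw [Finset.sum_eq_single_of_mem 0 (by simp; omega)]
  · simp
  · intro r hr hr0
    rw [Nat.choose_eq_zero_of_lt (by omega), Nat.cast_zero, zero_mul]

lemma Ea_rec (a b c : ℕ) : Ea (a+1) (b+1) c = Ea (a+1) b (c+1) + Ea a (b+1) (c+1) := by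
  unfold Ea
  have e1 : ∑ r ∈ range (a+1), ((b+1+r-1).choose r : ℝ) * dz (c+(b+1)+r) (a+1-r)
      = ∑ r ∈ range a, (((b+r).choose r : ℝ) + ((b+r).choose (r+1) : ℝ)) * dz (c+1+b+(r+1)) (a-r)
        + dz (c+1+b) (a+1) := by
    rw [Finset.sum_range_succ']
    congr 1
    · apply Finset.sum_congr rfl
      intro r hr
      rw [show b+1+(r+1)-1 = b+r+1 by omega, show c+(b+1)+(r+1) = c+1+b+(r+1) by omega,
        show a+1-(r+1) = a-r by omega, Nat.choose_succ_succ' (b+r) r]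
      push_cast
      ring
    · rw [show b+1+0-1 = b by omega, show c+(b+1)+0 = c+1+b by omega]
      simp
  have e2 : ∑ r ∈ range (a+1), ((b+r-1).choose r : ℝ) * dz (c+1+b+r) (a+1-r)
      = ∑ r ∈ range a, ((b+r).choose (r+1) : ℝ) * dz (c+1+b+(r+1)) (a-r) + dz (c+1+b) (a+1) := by
    rw [Finset.sum_range_succ']
    congr 1
    · apply Finset.sum_congr rfl
      intro r hr
      rw [show b+(r+1)-1 = b+r by omega, show a+1-(r+1) = a-r by omega]
    · simp
  have e3 : ∑ r ∈ range a, ((b+1+r-1).choose r : ℝ) * dz (c+1+(b+1)+r) (a-r)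
      = ∑ r ∈ range a, ((b+r).choose r : ℝ) * dz (c+1+b+(r+1)) (a-r) := by
    apply Finset.sum_congr rfl
    intro r hr
    rw [show b+1+r-1 = b+r by omega, show c+1+(b+1)+r = c+1+b+(r+1) by omega]
  rw [e1, e2, e3]
  simp_rw [add_mul]
  rw [Finset.sum_add_distrib]
  ring

lemma Eb_rec (a b c : ℕ) : Eb (a+1) (b+1) c = Eb (a+1) b (c+1) + Eb a (b+1) (c+1) := by
  unfold Eb
  have e1 : ∑ r ∈ range (b+1), ((a+1+r-1).choose r : ℝ) * dz (c+(a+1)+r) (b+1-r)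
      = ∑ r ∈ range b, (((a+r).choose r : ℝ) + ((a+r).choose (r+1) : ℝ)) * dz (c+1+a+(r+1)) (b-r)
        + dz (c+1+a) (b+1) := by
    rw [Finset.sum_range_succ']
    congr 1
    · apply Finset.sum_congr rfl
      intro r hr
      rw [show a+1+(r+1)-1 = a+r+1 by omega, show c+(a+1)+(r+1) = c+1+a+(r+1) by omega,
        show b+1-(r+1) = b-r by omega, Nat.choose_succ_succ' (a+r) r]
      push_cast
      ring
    · rw [show a+1+0-1 = a by omega, show c+(a+1)+0 = c+1+a by omega]
      simp
  have e2 : ∑ r ∈ range (b+1), ((a+r-1).choose r : ℝ) * dz (c+1+a+r) (b+1-r)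
      = ∑ r ∈ range b, ((a+r).choose (r+1) : ℝ) * dz (c+1+a+(r+1)) (b-r) + dz (c+1+a) (b+1) := by
    rw [Finset.sum_range_succ']
    congr 1
    · apply Finset.sum_congr rfl
      intro r hr
      rw [show a+(r+1)-1 = a+r by omega, show b+1-(r+1) = b-r by omega]
    · simp
  have e3 : ∑ r ∈ range b, ((a+1+r-1).choose r : ℝ) * dz (c+1+(a+1)+r) (b-r)
      = ∑ r ∈ range b, ((a+r).choose r : ℝ) * dz (c+1+a+(r+1)) (b-r) := by
    apply Finset.sum_congr rfl
    intro r hr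
    rw [show a+1+r-1 = a+r by omega, show c+1+(a+1)+r = c+1+a+(r+1) by omega]
  rw [e1, e2, e3]
  simp_rw [add_mul]
  rw [Finset.sum_add_distrib]
  ring

lemma wg_split (a b c : ℕ) :
    wg (a+1) (b+1) c = fun p => wg (a+1) b (c+1) p + wg a (b+1) (c+1) p := by
  funext ⟨m, n⟩
  unfold wg
  dsimp only
  split_ifs with h
  · obtain ⟨hm, hn⟩ := h
    have hm' : (0:ℝ) < m := by exact_mod_cast hm
    have hn' : (0:ℝ) < n := by exact_mod_cast hn
    rw [pow_succ ((m:ℝ)) a, pow_succ ((n:ℝ)) b, pow_succ ((m:ℝ)+(n:ℝ)) c]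
    field_simp
    ring
  · simp

lemma euler_aux : ∀ (n a b c : ℕ), a + b = n → 1 ≤ a → 1 ≤ b → 2 ≤ a + c → 2 ≤ b + c →
    HasSum (wg a b c) (Ea a b c + Eb a b c) := by
  intro n
  induction n using Nat.strong_induction_on with
  | _ n ih =>
  rintro a b c hab ha hb hac hbc
  obtain ⟨a', rfl⟩ : ∃ a', a = a' + 1 := ⟨a - 1, by omega⟩
  obtain ⟨b', rfl⟩ : ∃ b', b = b' + 1 := ⟨b - 1, by omega⟩
  have piece1 : HasSum (wg (a'+1) b' (c+1)) (Ea (a'+1) b' (c+1) + Eb (a'+1) b' (c+1)) := by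
    rcases Nat.eq_zero_or_pos b' with rfl | hb'
    · rw [Ea_zero_b _ _ (by omega), Eb_zero_b, add_zero]
      exact hasSum_wg_right (by omega) (by omega)
    · exact ih (a' + 1 + b') (by omega) _ _ _ rfl (by omega) hb' (by omega) (by omega)
  have piece2 : HasSum (wg a' (b'+1) (c+1)) (Ea a' (b'+1) (c+1) + Eb a' (b'+1) (c+1)) := by
    rcases Nat.eq_zero_or_pos a' with rfl | ha'
    · rw [Ea_zero_a, Eb_zero_a _ _ (by omega), zero_add]
      exact hasSum_wg_left (by omega) (by omega)
    · exact ih (a' + (b'+1)) (by omega) _ _ _ rfl ha' (by omega) (by omega) (by omega)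
  have h := piece1.add piece2
  rw [← wg_split] at h
  rw [show Ea (a'+1) (b'+1) c + Eb (a'+1) (b'+1) c =
    (Ea (a'+1) b' (c+1) + Eb (a'+1) b' (c+1)) + (Ea a' (b'+1) (c+1) + Eb a' (b'+1) (c+1)) from by
      rw [Ea_rec, Eb_rec]; ring]
  exact h

lemma wg_zero_c (a b : ℕ) : wg a b 0 = fun p => zf a p.1 * zf b p.2 := by
  funext ⟨m, n⟩
  unfold wg zf
  dsimp only
  split_ifs <;> try (simp_all; done)
  · rw [pow_zero, mul_one, div_mul_div_comm, one_mul]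

lemma euler_eq {a b : ℕ} (ha : 2 ≤ a) (hb : 2 ≤ b) : rz a * rz b = Ea a b 0 + Eb a b 0 := by
  have h := euler_aux (a + b) a b 0 rfl (by omega) (by omega) (by omega) (by omega)
  rw [wg_zero_c] at h
  exact (hasSum_zf ha).mul_eq (hasSum_zf hb) h

lemma Ea_icc {a b : ℕ} (ha : 2 ≤ a) (hb : 2 ≤ b) :
    Ea a b 0 = ∑ l1 ∈ Icc 2 (a + b - 1), ((l1 - 1).choose (b - 1) : ℝ) * dz l1 (a + b - l1) := by
  rw [← Finset.sum_subset (Finset.Icc_subset_Icc (by omega) le_rfl :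
      Icc b (a + b - 1) ⊆ Icc 2 (a + b - 1))]
  · unfold Ea
    apply Finset.sum_nbij' (i := fun r => b + r) (j := fun l1 => l1 - b)
    · intro r hr; simp only [mem_range] at hr; simp only [mem_Icc]; omega
    · intro l1 hl; simp only [mem_Icc] at hl; simp only [mem_range]; omega
    · intro r hr; omega
    · intro l1 hl; simp only [mem_Icc] at hl; omega
    · intro r hr
      simp only [mem_range] at hr
      rw [show (0:ℕ) + b + r = b + r by omega, show a + b - (b + r) = a - r by omega]
      have hsym := Nat.choose_symm (n := b + r - 1) (k := r) (by omega)
      rw [show b + r - 1 - r = b - 1 by omega] at hsym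
      rw [← hsym]
  · intro l1 hl1 hl2
    simp only [mem_Icc] at hl1
    simp only [mem_Icc, not_and, not_le] at hl2
    rw [Nat.choose_eq_zero_of_lt (by omega), Nat.cast_zero, zero_mul]

lemma Eb_icc {a b : ℕ} (ha : 2 ≤ a) (hb : 2 ≤ b) :
    Eb a b 0 = ∑ l1 ∈ Icc 2 (a + b - 1), ((l1 - 1).choose (a - 1) : ℝ) * dz l1 (a + b - l1) := by
  rw [← Finset.sum_subset (Finset.Icc_subset_Icc (by omega) le_rfl :
      Icc a (a + b - 1) ⊆ Icc 2 (a + b - 1))]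
  · unfold Eb
    apply Finset.sum_nbij' (i := fun r => a + r) (j := fun l1 => l1 - a)
    · intro r hr; simp only [mem_range] at hr; simp only [mem_Icc]; omega
    · intro l1 hl; simp only [mem_Icc] at hl; simp only [mem_range]; omega
    · intro r hr; omega
    · intro l1 hl; simp only [mem_Icc] at hl; omega
    · intro r hr
      simp only [mem_range] at hr
      rw [show (0:ℕ) + a + r = a + r by omega, show a + b - (a + r) = b - r by omega]
      have hsym := Nat.choose_symm (n := a + r - 1) (k := r) (by omega)
      rw [show a + r - 1 - r = a - 1 by omega] at hsym
      rw [← hsym]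
  · intro l1 hl1 hl2
    simp only [mem_Icc] at hl1
    simp only [mem_Icc, not_and, not_le] at hl2
    rw [Nat.choose_eq_zero_of_lt (by omega), Nat.cast_zero, zero_mul]

lemma central {a b : ℕ} (ha : 2 ≤ a) (hb : 2 ≤ b) :
    ∑ l1 ∈ Icc 2 (a + b - 1),
        (((l1 - 1).choose (a - 1) : ℝ) + ((l1 - 1).choose (b - 1) : ℝ)) * dz l1 (a + b - l1)
      = dz a b + dz b a + rz (a + b) := by
  rw [← stuffle ha hb, euler_eq ha hb, Ea_icc ha hb, Eb_icc ha hb]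
  simp_rw [add_mul]
  rw [Finset.sum_add_distrib, add_comm (∑ l1 ∈ Icc 2 (a + b - 1),
    ((l1 - 1).choose (b - 1) : ℝ) * dz l1 (a + b - l1))]

noncomputable def HN (n : ℕ) : ℝ := ∑ j ∈ range n, 1 / ((j : ℝ) + 1)

lemma hasSum_tele (j : ℕ) :
    HasSum (fun s : ℕ => 1 / ((s : ℝ) + j + 1) - 1 / ((s : ℝ) + j + 2)) (1 / ((j : ℝ) + 1)) := by
  rw [hasSum_iff_tendsto_nat_of_nonneg]
  · have hps : ∀ N : ℕ, ∑ s ∈ range N, (1 / ((s : ℝ) + j + 1) - 1 / ((s : ℝ) + j + 2))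
        = 1 / ((j : ℝ) + 1) - 1 / ((N : ℝ) + j + 1) := by
      intro N
      calc ∑ s ∈ range N, (1 / ((s : ℝ) + j + 1) - 1 / ((s : ℝ) + j + 2))
          = ∑ s ∈ range N, ((fun k : ℕ => 1 / ((k : ℝ) + j + 1)) s -
              (fun k : ℕ => 1 / ((k : ℝ) + j + 1)) (s + 1)) := by
            apply Finset.sum_congr rfl
            intro s _
            dsimp only
            push_cast
            ring_nf
        _ = (fun k : ℕ => 1 / ((k : ℝ) + j + 1)) 0 - (fun k : ℕ => 1 / ((k : ℝ) + j + 1)) N :=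
            Finset.sum_range_sub' _ N
        _ = 1 / ((j : ℝ) + 1) - 1 / ((N : ℝ) + j + 1) := by norm_num
    simp only [hps]
    have hdenom : Filter.Tendsto (fun N : ℕ => (N : ℝ) + j + 1) Filter.atTop Filter.atTop := by
      apply Filter.tendsto_atTop_add_const_right
      apply Filter.tendsto_atTop_add_const_right
      exact tendsto_natCast_atTop_atTop
    have h0 : Filter.Tendsto (fun N : ℕ => 1 / ((N : ℝ) + j + 1)) Filter.atTop (nhds 0) := by
      simp only [one_div]
      exact hdenom.inv_tendsto_atTop
    have := (tendsto_const_nhds (x := 1 / ((j : ℝ) + 1)) (f := Filter.atTop (α := ℕ))).sub h0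
    simpa using this
  · intro s
    have h1 : (0:ℝ) < (s : ℝ) + j + 1 := by positivity
    have h2 : (s : ℝ) + j + 1 ≤ (s : ℝ) + j + 2 := by linarith
    have := one_div_le_one_div_of_le h1 h2
    linarith

lemma hasSum_row (t : ℕ) :
    HasSum (fun s : ℕ => 1 / ((s : ℝ) + 1) - 1 / ((s : ℝ) + (t : ℝ) + 2)) (HN (t + 1)) := by
  have h := hasSum_sum (s := range (t + 1))
    (f := fun (j : ℕ) (s : ℕ) => 1 / ((s : ℝ) + (j:ℝ) + 1) - 1 / ((s : ℝ) + (j:ℝ) + 2))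
    (a := fun (j : ℕ) => 1 / ((j : ℝ) + 1)) (fun j _ => hasSum_tele j)
  have hfun : (fun s : ℕ => 1 / ((s : ℝ) + 1) - 1 / ((s : ℝ) + (t : ℝ) + 2))
      = fun s : ℕ => ∑ j ∈ range (t + 1),
          (1 / ((s : ℝ) + (j:ℝ) + 1) - 1 / ((s : ℝ) + (j:ℝ) + 2)) := by
    funext s
    calc 1 / ((s : ℝ) + 1) - 1 / ((s : ℝ) + (t : ℝ) + 2)
        = (fun j : ℕ => 1 / ((s : ℝ) + (j:ℝ) + 1)) 0 -
            (fun j : ℕ => 1 / ((s : ℝ) + (j:ℝ) + 1)) (t + 1) := by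
          dsimp only
          push_cast
          ring_nf
      _ = ∑ j ∈ range (t + 1), ((fun j : ℕ => 1 / ((s : ℝ) + (j:ℝ) + 1)) j -
            (fun j : ℕ => 1 / ((s : ℝ) + (j:ℝ) + 1)) (j + 1)) :=
          (Finset.sum_range_sub' (fun j : ℕ => 1 / ((s : ℝ) + (j:ℝ) + 1)) (t + 1)).symm
      _ = ∑ j ∈ range (t + 1), (1 / ((s : ℝ) + (j:ℝ) + 1) - 1 / ((s : ℝ) + (j:ℝ) + 2)) := by
          apply Finset.sum_congr rfl
          intro i _
          dsimp only
          push_cast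
          ring_nf
  rw [hfun]
  exact h

noncomputable def F1 (l : ℕ) (p : ℕ × ℕ) : ℝ :=
  if p.2 < p.1 ∧ 0 < p.2 then
    1 / ((p.2 : ℝ) ^ (l - 2) * (p.1 : ℝ) * ((p.1 : ℝ) - (p.2 : ℝ))) else 0

noncomputable def F2 (l : ℕ) (p : ℕ × ℕ) : ℝ :=
  if p.2 < p.1 ∧ 0 < p.2 then
    1 / ((p.1 : ℝ) ^ (l - 1) * ((p.1 : ℝ) - (p.2 : ℝ))) else 0

lemma geom_sum_aux (M N : ℝ) (hN : 0 < N) (h : N < M) (t : ℕ) :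
    ∑ i ∈ range t, 1 / (M ^ (i + 2) * N ^ (t - i))
      = 1 / (N ^ t * M * (M - N)) - 1 / (M ^ (t + 1) * (M - N)) := by
  have hM : M ≠ 0 := ne_of_gt (lt_trans hN h)
  have hN0 : N ≠ 0 := ne_of_gt hN
  have hMN : M - N ≠ 0 := sub_ne_zero.mpr (ne_of_gt h)
  induction t with
  | zero => simp only [range_zero, sum_empty, pow_zero, one_mul, pow_one]; ring
  | succ t ih =>
    rw [Finset.sum_range_succ, show t + 1 - t = 1 by omega]
    have hcongr : ∑ i ∈ range t, 1 / (M ^ (i + 2) * N ^ (t + 1 - i))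
        = ∑ i ∈ range t, (1 / N) * (1 / (M ^ (i + 2) * N ^ (t - i))) := by
      apply Finset.sum_congr rfl
      intro i hi
      simp only [mem_range] at hi
      rw [show t + 1 - i = (t - i) + 1 by omega, pow_succ]
      ring
    rw [hcongr, ← Finset.mul_sum, ih]
    field_simp
    ring

lemma df_sum_eq (l : ℕ) (hl : 4 ≤ l) (p : ℕ × ℕ) :
    ∑ k ∈ Icc 2 (l - 1), df k (l - k) p = F1 l p - F2 l p := by
  obtain ⟨m, n⟩ := p
  by_cases h : n < m ∧ 0 < n
  · unfold F1 F2
    dsimp only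
    rw [if_pos h, if_pos h]
    have hN : (0:ℝ) < n := by exact_mod_cast h.2
    have hNM : (n:ℝ) < m := by exact_mod_cast h.1
    have hgeo := geom_sum_aux (m : ℝ) (n : ℝ) hN hNM (l - 2)
    rw [show l - 2 + 1 = l - 1 by omega] at hgeo
    rw [← hgeo]
    apply Finset.sum_nbij' (i := fun k => k - 2) (j := fun i => i + 2)
    · intro k hk; simp only [mem_Icc] at hk; simp only [mem_range]; omega
    · intro i hi; simp only [mem_range] at hi; simp only [mem_Icc]; omega
    · intro k hk; simp only [mem_Icc] at hk; omega
    · intro i hi; omega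
    · intro k hk
      simp only [mem_Icc] at hk
      unfold df
      dsimp only
      rw [if_pos h, show k - 2 + 2 = k by omega, show l - 2 - (k - 2) = l - k by omega]
  · unfold F1 F2
    dsimp only
    rw [if_neg h, if_neg h]
    rw [Finset.sum_eq_zero]
    · ring
    · intro k hk
      unfold df
      dsimp only
      rw [if_neg h]

lemma F2_vanish (l : ℕ) : ∀ x ∉ Set.range PP2, F2 l x = 0 := by
  intro x hx
  unfold F2
  rw [if_neg fun h => hx (mem_range_PP2 h)]

lemma hasSum_F2 (l : ℕ) (hl : 4 ≤ l) : HasSum (F2 l) (dz (l - 1) 1) := by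
  have h2 : HasSum (df (l - 1) 1 ∘ PP) (dz (l - 1) 1) :=
    (PP_inj.hasSum_iff (df_vanish_PP _ _)).mpr (hasSum_df (by omega) le_rfl)
  have h3 : df (l - 1) 1 ∘ PP = F2 l ∘ PP2 := by
    funext q
    obtain ⟨s, t⟩ := q
    simp only [comp_apply, PP, PP2, df, F2]
    simp only [show t + 1 < s + t + 2 ∧ 0 < t + 1 by omega, show s + 1 < s + t + 2 ∧ 0 < s + 1 by omega, and_self, ↓reduceIte]
    push_cast
    rw [pow_one]
    ring_nf
  rw [h3] at h2
  exact (PP2_inj.hasSum_iff (F2_vanish l)).mp h2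

noncomputable def GG (l : ℕ) (q : ℕ × ℕ) : ℝ :=
  (1 / ((q.1 : ℝ) + 1) ^ (l - 1)) * (1 / ((q.2 : ℝ) + 1) - 1 / ((q.2 : ℝ) + (q.1 : ℝ) + 2))

def PPs (q : ℕ × ℕ) : ℕ × ℕ := (q.2 + q.1 + 2, q.1 + 1)

lemma PPs_inj : Injective PPs := by
  rintro ⟨t, s⟩ ⟨t', s'⟩ h
  simp only [PPs, Prod.mk.injEq] at h
  exact Prod.ext (by omega) (by omega)

lemma mem_range_PPs {x : ℕ × ℕ} (h : x.2 < x.1 ∧ 0 < x.2) : x ∈ Set.range PPs :=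
  ⟨(x.2 - 1, x.1 - x.2 - 1), Prod.ext (by simp only [PPs]; omega) (by simp only [PPs]; omega)⟩

lemma F1_vanish (l : ℕ) : ∀ x ∉ Set.range PPs, F1 l x = 0 := by
  intro x hx
  unfold F1
  rw [if_neg fun h => hx (mem_range_PPs h)]

lemma F1_supp (l : ℕ) : support (F1 l) ⊆ Set.range PPs := by
  intro x hx
  by_contra h
  exact hx (F1_vanish l x h)

lemma tele_nonneg (s t : ℕ) : 0 ≤ 1 / ((s : ℝ) + 1) - 1 / ((s : ℝ) + (t : ℝ) + 2) := by
  have h1 : (0:ℝ) < (s : ℝ) + 1 := by positivity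
  have := one_div_le_one_div_of_le h1 (by push_cast; linarith : (s:ℝ) + 1 ≤ (s:ℝ) + (t:ℝ) + 2)
  linarith

lemma GG_nonneg (l : ℕ) : 0 ≤ GG l := by
  intro q
  unfold GG
  exact mul_nonneg (by positivity) (tele_nonneg q.2 q.1)

lemma F1_comp (l : ℕ) (hl : 4 ≤ l) : F1 l ∘ PPs = GG l := by
  funext q
  obtain ⟨t, s⟩ := q
  simp only [comp_apply, PPs, F1, GG]
  simp only [show t + 1 < s + t + 2 ∧ 0 < t + 1 by omega, and_self, ↓reduceIte]
  rw [show l - 1 = (l - 2) + 1 by omega, pow_succ]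
  have h1 : ((t:ℝ) + 1) ≠ 0 := by positivity
  have h2 : ((s:ℝ) + 1) ≠ 0 := by positivity
  have h3 : ((s:ℝ) + (t:ℝ) + 2) ≠ 0 := by positivity
  push_cast
  rw [show (s:ℝ) + (t:ℝ) + 2 - ((t:ℝ) + 1) = (s:ℝ) + 1 by ring]
  rw [div_sub_div 1 1 h2 h3, div_mul_div_comm, div_eq_div_iff (by positivity) (by positivity)]
  ring

lemma hasSum_GG_row (l t : ℕ) :
    HasSum (fun s => GG l (t, s)) ((1 / ((t : ℝ) + 1) ^ (l - 1)) * HN (t + 1)) := by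
  have := (hasSum_row t).mul_left (1 / ((t : ℝ) + 1) ^ (l - 1))
  exact this

lemma HN_le (n : ℕ) : HN n ≤ (n : ℝ) := by
  unfold HN
  calc ∑ j ∈ range n, 1 / ((j : ℝ) + 1) ≤ ∑ _j ∈ range n, (1:ℝ) := by
        apply Finset.sum_le_sum
        intro j _
        rw [div_le_one (by positivity)]
        push_cast
        linarith
    _ = n := by simp

lemma summable_sq_shift : Summable (fun t : ℕ => 1 / ((t : ℝ) + 1) ^ 2) := by
  have h : Summable (fun t : ℕ => 1 / (t : ℝ) ^ 2) :=
    Real.summable_one_div_nat_pow.mpr one_lt_two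
  have h2 := (summable_nat_add_iff 1).mpr h
  apply h2.congr
  intro t
  push_cast
  ring_nf

lemma GG_rowsum_le (l t : ℕ) (hl : 4 ≤ l) :
    (1 / ((t : ℝ) + 1) ^ (l - 1)) * HN (t + 1) ≤ 1 / ((t : ℝ) + 1) ^ 2 := by
  have ht1 : (1:ℝ) ≤ (t : ℝ) + 1 := by push_cast; linarith
  calc (1 / ((t : ℝ) + 1) ^ (l - 1)) * HN (t + 1)
      ≤ (1 / ((t : ℝ) + 1) ^ (l - 1)) * ((t : ℝ) + 1) := by
        apply mul_le_mul_of_nonneg_left _ (by positivity)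
        have := HN_le (t + 1)
        push_cast at this
        linarith
    _ = ((t : ℝ) + 1) / ((t : ℝ) + 1) ^ (l - 1) := by ring
    _ ≤ 1 / ((t : ℝ) + 1) ^ 2 := by
        rw [div_le_div_iff₀ (by positivity) (by positivity), one_mul, ← pow_succ']
        exact pow_le_pow_right₀ ht1 (by omega)

lemma summable_GG (l : ℕ) (hl : 4 ≤ l) : Summable (GG l) := by
  rw [summable_prod_of_nonneg (GG_nonneg l)]
  constructor
  · intro t
    exact (hasSum_GG_row l t).summable
  · apply Summable.of_nonneg_of_le _ _ summable_sq_shift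
    · intro t
      exact tsum_nonneg fun s => GG_nonneg l (t, s)
    · intro t
      rw [(hasSum_GG_row l t).tsum_eq]
      exact GG_rowsum_le l t hl

lemma tsum_GG (l : ℕ) (hl : 4 ≤ l) :
    ∑' q : ℕ × ℕ, GG l q = ∑' t : ℕ, (1 / ((t : ℝ) + 1) ^ (l - 1)) * HN (t + 1) := by
  rw [Summable.tsum_prod' (summable_GG l hl) (fun t => (hasSum_GG_row l t).summable)]
  exact tsum_congr fun t => (hasSum_GG_row l t).tsum_eq

noncomputable def Hd (l : ℕ) (q : ℕ × ℕ) : ℝ :=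
  if q.2 ≤ q.1 then 1 / (((q.1 : ℝ) + 1) ^ (l - 1) * ((q.2 : ℝ) + 1)) else 0
noncomputable def Hd1 (l : ℕ) (q : ℕ × ℕ) : ℝ :=
  if q.2 < q.1 then 1 / (((q.1 : ℝ) + 1) ^ (l - 1) * ((q.2 : ℝ) + 1)) else 0
noncomputable def Hd2 (l : ℕ) (q : ℕ × ℕ) : ℝ :=
  if q.2 = q.1 then 1 / (((q.1 : ℝ) + 1) ^ (l - 1) * ((q.2 : ℝ) + 1)) else 0

lemma Hd_split (l : ℕ) : Hd l = fun q => Hd1 l q + Hd2 l q := by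
  funext q
  unfold Hd Hd1 Hd2
  split_ifs <;> try omega
  · exact (add_zero _).symm
  · exact (zero_add _).symm
  · exact (add_zero 0).symm

def RR1 (q : ℕ × ℕ) : ℕ × ℕ := (q.2 + q.1 + 1, q.2)

lemma RR1_inj : Injective RR1 := by
  rintro ⟨s, j⟩ ⟨s', j'⟩ h
  simp only [RR1, Prod.mk.injEq] at h
  exact Prod.ext (by omega) (by omega)

lemma Hd1_vanish (l : ℕ) : ∀ x ∉ Set.range RR1, Hd1 l x = 0 := by
  intro x hx
  unfold Hd1
  rw [if_neg]
  intro h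
  exact hx ⟨(x.1 - x.2 - 1, x.2), Prod.ext (by simp only [RR1]; omega) rfl⟩

lemma hasSum_Hd1 (l : ℕ) (hl : 4 ≤ l) : HasSum (Hd1 l) (dz (l - 1) 1) := by
  have h2 : HasSum (df (l - 1) 1 ∘ PP) (dz (l - 1) 1) :=
    (PP_inj.hasSum_iff (df_vanish_PP _ _)).mpr (hasSum_df (by omega) le_rfl)
  have h3 : df (l - 1) 1 ∘ PP = Hd1 l ∘ RR1 := by
    funext q
    obtain ⟨s, j⟩ := q
    simp only [comp_apply, PP, RR1, df, Hd1]
    split_ifs with hA hB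
    · push_cast
      rw [pow_one]
      ring_nf
      simp only [show 1 + j < 2 + j + s ∧ 0 < 1 + j by omega, show j < 1 + j + s by omega, and_self, ↓reduceIte]
    · omega
  rw [h3] at h2
  exact (RR1_inj.hasSum_iff (Hd1_vanish l)).mp h2

lemma hasSum_Hd2 (l : ℕ) (hl : 4 ≤ l) : HasSum (Hd2 l) (rz l) := by
  have hsucc : Injective Nat.succ := Nat.succ_injective
  have h1 : HasSum (zf l ∘ Nat.succ) (rz l) := by
    apply (hsucc.hasSum_iff _).mpr (hasSum_zf (by omega))
    intro x hx
    have hx0 : x = 0 := by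
      by_contra h
      exact hx ⟨x - 1, by omega⟩
    subst hx0
    unfold zf
    rw [if_neg (by omega)]
  have hd : Injective (fun m : ℕ => ((m, m) : ℕ × ℕ)) := fun x y h =>
    ((Prod.mk.injEq _ _ _ _).mp h).1
  have h3 : zf l ∘ Nat.succ = Hd2 l ∘ (fun m : ℕ => ((m, m) : ℕ × ℕ)) := by
    funext m
    simp only [comp_apply, zf, Hd2]
    rw [if_pos (Nat.succ_pos m), if_pos trivial]
    conv_lhs => rw [show l = (l - 1) + 1 by omega]
    rw [pow_succ]
    push_cast
    ring_nf
  rw [h3] at h1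
  apply (hd.hasSum_iff _).mp h1
  intro x hx
  unfold Hd2
  rw [if_neg]
  intro h
  exact hx ⟨x.2, Prod.ext (by simp [h]) rfl⟩

lemma hasSum_Hd (l : ℕ) (hl : 4 ≤ l) : HasSum (Hd l) (dz (l - 1) 1 + rz l) := by
  rw [Hd_split]
  exact (hasSum_Hd1 l hl).add (hasSum_Hd2 l hl)

lemma Hd_row_summable (l t : ℕ) : Summable (fun j => Hd l (t, j)) := by
  apply summable_of_ne_finset_zero (s := range (t + 1))
  intro j hj
  simp only [mem_range] at hj
  unfold Hd
  rw [if_neg (by omega)]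

lemma Hd_row_tsum (l t : ℕ) :
    ∑' j, Hd l (t, j) = (1 / ((t : ℝ) + 1) ^ (l - 1)) * HN (t + 1) := by
  rw [tsum_eq_sum (s := range (t + 1)) (fun j hj => by
    simp only [mem_range] at hj
    unfold Hd
    rw [if_neg (by omega)])]
  unfold HN
  rw [Finset.mul_sum]
  apply Finset.sum_congr rfl
  intro j hj
  simp only [mem_range] at hj
  unfold Hd
  rw [if_pos (by omega : ((t, j) : ℕ × ℕ).2 ≤ (t, j).1)]
  rw [div_mul_div_comm, one_mul]

lemma tsum_Hd (l : ℕ) (hl : 4 ≤ l) :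
    ∑' q : ℕ × ℕ, Hd l q = ∑' t : ℕ, (1 / ((t : ℝ) + 1) ^ (l - 1)) * HN (t + 1) := by
  rw [Summable.tsum_prod' (hasSum_Hd l hl).summable (Hd_row_summable l)]
  exact tsum_congr fun t => Hd_row_tsum l t

lemma hasSum_F1 (l : ℕ) (hl : 4 ≤ l) : HasSum (F1 l) (dz (l - 1) 1 + rz l) := by
  have hsummF1 : Summable (F1 l) := by
    apply (PPs_inj.summable_iff (F1_vanish l)).mp
    rw [F1_comp l hl]
    exact summable_GG l hl
  have htsum : ∑' p, F1 l p = dz (l - 1) 1 + rz l := by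
    rw [← PPs_inj.tsum_eq (F1_supp l)]
    calc ∑' q, F1 l (PPs q) = ∑' q, GG l q := by
          apply tsum_congr
          intro q
          have := congrFun (F1_comp l hl) q
          simpa using this
      _ = ∑' t : ℕ, (1 / ((t : ℝ) + 1) ^ (l - 1)) * HN (t + 1) := tsum_GG l hl
      _ = ∑' q : ℕ × ℕ, Hd l q := (tsum_Hd l hl).symm
      _ = dz (l - 1) 1 + rz l := (hasSum_Hd l hl).tsum_eq
  rw [← htsum]
  exact hsummF1.hasSum

/-- Euler's sum formula for double zeta values -/
lemma sum_formula (l : ℕ) (hl : 4 ≤ l) : ∑ k ∈ Icc 2 (l - 1), dz k (l - k) = rz l := by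
  have hsummands : ∀ k ∈ Icc 2 (l - 1), Summable (df k (l - k)) := by
    intro k hk
    simp only [mem_Icc] at hk
    exact summable_df (by omega) (by omega)
  calc ∑ k ∈ Icc 2 (l - 1), dz k (l - k)
      = ∑ k ∈ Icc 2 (l - 1), ∑' p, df k (l - k) p := by
        apply Finset.sum_congr rfl
        intro k _
        rw [dz_eq]
    _ = ∑' p, ∑ k ∈ Icc 2 (l - 1), df k (l - k) p := (Summable.tsum_finsetSum hsummands).symm
    _ = ∑' p : ℕ × ℕ, (F1 l p - F2 l p) := tsum_congr (df_sum_eq l hl)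
    _ = (dz (l - 1) 1 + rz l) - dz (l - 1) 1 := by
        rw [Summable.tsum_sub (hasSum_F1 l hl).summable (hasSum_F2 l hl).summable,
          (hasSum_F1 l hl).tsum_eq, (hasSum_F2 l hl).tsum_eq]
    _ = rz l := by ring

noncomputable def D (l : ℕ) (x y : ℝ) : ℝ :=
  ∑ l1 ∈ Finset.Icc 2 (l - 1), x ^ (l1 - 1) * y ^ (l - l1 - 1) * dz l1 (l - l1)

noncomputable def c1 (l : ℕ) (k : ℕ) : ℝ :=
  ∑ l1 ∈ Icc 2 (l - 1), ((l1 - 1).choose k : ℝ) * dz l1 (l - l1)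

noncomputable def e1 (l : ℕ) (k : ℕ) : ℝ := if 1 ≤ k then dz (k + 1) (l - 1 - k) else 0

lemma c1_zero (l : ℕ) (hl : 4 ≤ l) : c1 l 0 = rz l := by
  unfold c1
  rw [← sum_formula l hl]
  apply Finset.sum_congr rfl
  intro l1 _
  simp [Nat.choose_zero_right]

lemma c1_top (l : ℕ) (hl : 4 ≤ l) : c1 l (l - 2) = dz (l - 1) 1 := by
  unfold c1
  rw [Finset.sum_eq_single_of_mem (l - 1) (by simp only [mem_Icc]; omega)]
  · rw [show l - 1 - 1 = l - 2 by omega, Nat.choose_self, show l - (l - 1) = 1 by omega]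
    simp
  · intro b hb hne
    simp only [mem_Icc] at hb
    rw [Nat.choose_eq_zero_of_lt (by omega), Nat.cast_zero, zero_mul]

lemma key (l : ℕ) (hl : 4 ≤ l) (k : ℕ) (hk : k ≤ l - 2) :
    c1 l k + c1 l (l - 2 - k) = e1 l k + e1 l (l - 2 - k) + rz l := by
  rcases Nat.eq_zero_or_pos k with rfl | hk1
  · rw [c1_zero l hl, show l - 2 - 0 = l - 2 by omega, c1_top l hl]
    unfold e1
    rw [if_neg (by omega), if_pos (by omega)]
    rw [show l - 2 + 1 = l - 1 by omega, show l - 1 - (l - 2) = 1 by omega]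
    ring
  rcases eq_or_lt_of_le hk with hk2 | hk2
  · rw [hk2, show l - 2 - (l - 2) = 0 by omega, c1_zero l hl, c1_top l hl]
    unfold e1
    rw [if_pos (by omega), if_neg (by omega), show l - 2 + 1 = l - 1 by omega,
      show l - 1 - (l - 2) = 1 by omega]
    ring
  · have hc := central (a := k + 1) (b := l - 1 - k) (by omega) (by omega)
    have hab : (k + 1) + (l - 1 - k) = l := by omega
    rw [hab] at hc
    unfold c1 e1
    rw [if_pos (by omega), if_pos (by omega)]
    rw [show l - 2 - k + 1 = l - 1 - k by omega, show l - 1 - (l - 2 - k) = k + 1 by omega]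
    rw [← hc, ← Finset.sum_add_distrib]
    apply Finset.sum_congr rfl
    intro l1 _
    rw [show k + 1 - 1 = k by omega, show l - 1 - k - 1 = l - 2 - k by omega]
    push_cast
    ring

lemma D_expand (l : ℕ) (hl : 4 ≤ l) (x y : ℝ) :
    D l (x + y) y = ∑ k ∈ range (l - 1), x ^ k * y ^ (l - 2 - k) * c1 l k := by
  unfold D c1
  have h1 : ∀ l1 ∈ Icc 2 (l - 1), (x + y) ^ (l1 - 1) * y ^ (l - l1 - 1) * dz l1 (l - l1)
      = ∑ k ∈ range (l - 1),
          ((l1 - 1).choose k : ℝ) * (x ^ k * y ^ (l - 2 - k)) * dz l1 (l - l1) := by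
    intro l1 hl1
    simp only [mem_Icc] at hl1
    rw [add_pow, Finset.sum_mul, Finset.sum_mul]
    rw [Finset.sum_congr rfl (fun m hm => ?_)]
    rotate_left
    · exact fun m => ((l1 - 1).choose m : ℝ) * (x ^ m * y ^ (l - 2 - m)) * dz l1 (l - l1)
    · simp only [mem_range] at hm
      have hy : y ^ (l1 - 1 - m) * y ^ (l - l1 - 1) = y ^ (l - 2 - m) := by
        rw [← pow_add]
        congr 1
        omega
      calc x ^ m * y ^ (l1 - 1 - m) * ((l1 - 1).choose m : ℝ) * y ^ (l - l1 - 1) * dz l1 (l - l1)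
          = ((l1 - 1).choose m : ℝ) * (x ^ m * (y ^ (l1 - 1 - m) * y ^ (l - l1 - 1)))
              * dz l1 (l - l1) := by ring
        _ = ((l1 - 1).choose m : ℝ) * (x ^ m * y ^ (l - 2 - m)) * dz l1 (l - l1) := by rw [hy]
    · apply Finset.sum_subset (Finset.range_subset_range.mpr (by omega))
      intro k _ hk
      simp only [mem_range] at hk
      rw [Nat.choose_eq_zero_of_lt (by omega), Nat.cast_zero, zero_mul, zero_mul]
  rw [Finset.sum_congr rfl h1, Finset.sum_comm]
  apply Finset.sum_congr rfl
  intro k _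
  rw [Finset.mul_sum]
  apply Finset.sum_congr rfl
  intro l1 _
  ring

lemma D_expand2 (l : ℕ) (hl : 4 ≤ l) (x y : ℝ) :
    D l (x + y) x = ∑ k ∈ range (l - 1), x ^ k * y ^ (l - 2 - k) * c1 l (l - 2 - k) := by
  rw [add_comm x y, D_expand l hl y x,
    ← Finset.sum_range_reflect (fun k => y ^ k * x ^ (l - 2 - k) * c1 l k) (l - 1)]
  apply Finset.sum_congr rfl
  intro j hj
  simp only [mem_range] at hj
  rw [show l - 1 - 1 - j = l - 2 - j by omega, show l - 2 - (l - 2 - j) = j by omega]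
  ring

lemma Dxy_expand (l : ℕ) (hl : 4 ≤ l) (x y : ℝ) :
    D l x y = ∑ k ∈ range (l - 1), x ^ k * y ^ (l - 2 - k) * e1 l k := by
  unfold D e1
  rw [← Finset.sum_subset
    (by intro k hk; simp only [mem_Icc] at hk; simp only [mem_range]; omega :
      Icc 1 (l - 2) ⊆ range (l - 1))]
  · apply Finset.sum_nbij' (i := fun l1 => l1 - 1) (j := fun k => k + 1)
    · intro l1 h; simp only [mem_Icc] at h ⊢; omega
    · intro k h; simp only [mem_Icc] at h ⊢; omega
    · intro l1 h; simp only [mem_Icc] at h; omega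
    · intro k h; omega
    · intro l1 h
      simp only [mem_Icc] at h
      rw [if_pos (by omega), show l - 2 - (l1 - 1) = l - l1 - 1 by omega,
        show l1 - 1 + 1 = l1 by omega, show l - 1 - (l1 - 1) = l - l1 by omega]
  · intro k hk1 hk2
    simp only [mem_range] at hk1
    simp only [mem_Icc, not_and, not_le] at hk2
    rw [if_neg (by omega), mul_zero]

lemma Dyx_expand (l : ℕ) (hl : 4 ≤ l) (x y : ℝ) :
    D l y x = ∑ k ∈ range (l - 1), x ^ k * y ^ (l - 2 - k) * e1 l (l - 2 - k) := by
  rw [Dxy_expand l hl y x,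
    ← Finset.sum_range_reflect (fun k => y ^ k * x ^ (l - 2 - k) * e1 l k) (l - 1)]
  apply Finset.sum_congr rfl
  intro j hj
  simp only [mem_range] at hj
  rw [show l - 1 - 1 - j = l - 2 - j by omega, show l - 2 - (l - 2 - j) = j by omega]
  ring

theorem parameterized_sum_formula_double (l : ℕ) (hl : 4 ≤ l) (x y : ℝ) :
    D l (x + y) y + D l (x + y) x =
      D l x y + D l y x + (∑ j ∈ Finset.range (l - 1), x ^ j * y ^ (l - 2 - j)) * rz l := by
  rw [D_expand l hl x y, D_expand2 l hl x y, Dxy_expand l hl x y, Dyx_expand l hl x y,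
    Finset.sum_mul, ← Finset.sum_add_distrib, ← Finset.sum_add_distrib,
    ← Finset.sum_add_distrib]
  apply Finset.sum_congr rfl
  intro k hk
  simp only [mem_range] at hk
  have hkey := key l hl k (by omega)
  calc x ^ k * y ^ (l - 2 - k) * c1 l k + x ^ k * y ^ (l - 2 - k) * c1 l (l - 2 - k)
      = x ^ k * y ^ (l - 2 - k) * (c1 l k + c1 l (l - 2 - k)) := by ring
    _ = x ^ k * y ^ (l - 2 - k) * (e1 l k + e1 l (l - 2 - k) + rz l) := by rw [hkey]
    _ = x ^ k * y ^ (l - 2 - k) * e1 l k + x ^ k * y ^ (l - 2 - k) * e1 l (l - 2 - k)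
        + x ^ k * y ^ (l - 2 - k) * rz l := by ring
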